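/- With the tetrahedron construction h built from a triangle t, the edge entry h(n,0,n) equals the tetrahedron trinomial transform b_n = Σ_{i=0}^{n} Σ_{j=0}^{i} T(n; j, n-i, i-j) · t(i,j). -/

import Mathlib

open Finset

def trinom (n p q r : ℕ) : ℕ := n.factorial / (p.factorial * q.factorial * r.factorial)

def H (t : ℕ → ℕ → ℝ) : ℕ → ℕ → ℕ → ℝ
  | i, j, 0 => t i j
  | i, j, k + 1 => H t (i - 1) j k + H t i j k + H t i (j + 1) k

def c : ℕ → ℕ → ℕ → ℕ
  | 0, 0, 0 => 1
  | 0, _+1, _ => 0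
  | 0, 0, _+1 => 0
  | k+1, 0, 0 => c k 0 0
  | k+1, p+1, 0 => c k p 0 + c k (p+1) 0
  | k+1, 0, r+1 => c k 0 (r+1) + c k 0 r
  | k+1, p+1, r+1 => c k p (r+1) + c k (p+1) (r+1) + c k (p+1) r

lemma c_eq : ∀ k p r, c k p r = k.choose r * (k - r).choose p := by
  intro k
  induction k with
  | zero =>
    intro p r
    match p, r with
    | 0, 0 => simp [c]
    | p+1, 0 => simp [c]
    | p+1, r+1 => simp [c]
    | 0, r+1 => simp [c]
  | succ k ih =>
    intro p r
    match p, r with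
    | 0, 0 => simp [c, ih]
    | p+1, 0 =>
      simp only [c, ih, Nat.choose_zero_right, one_mul, Nat.sub_zero]
      rw [Nat.choose_succ_succ]
      try simp [Nat.succ_eq_add_one]
      try omega
    | 0, r+1 =>
      simp only [c, ih, Nat.choose_zero_right, mul_one, one_mul]
      rw [Nat.choose_succ_succ]
      simp [Nat.succ_eq_add_one]
      omega
    | p+1, r+1 =>
      rcases lt_trichotomy r k with h | h | h
      · have h1 : k - r = (k - (r+1)) + 1 := by omega
        have e1 : (k+1).choose (r+1) = k.choose r + k.choose (r+1) := Nat.choose_succ_succ k r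
        have e2 : (k-r).choose (p+1) = (k-(r+1)).choose p + (k-(r+1)).choose (p+1) := by
          rw [h1]; exact Nat.choose_succ_succ _ p
        simp only [c, ih]
        rw [show k+1-(r+1) = k-r from by omega, e1, e2]
        ring
      · subst h
        simp [c, ih, Nat.choose_succ_self, Nat.sub_self, Nat.choose_self]
      · have h1 : k.choose (r+1) = 0 := Nat.choose_eq_zero_of_lt (by omega)
        have h2 : k.choose r = 0 := Nat.choose_eq_zero_of_lt h
        have h3 : (k+1).choose (r+1) = 0 := Nat.choose_eq_zero_of_lt (by omega)
        simp [c, ih, h1, h2, h3]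

lemma c_top1 (k p : ℕ) : c k p (k+1) = 0 := by
  rw [c_eq, Nat.choose_eq_zero_of_lt (Nat.lt_succ_self k), zero_mul]

lemma c_top2 (k r : ℕ) : c k (k+1) r = 0 := by
  rw [c_eq, Nat.choose_eq_zero_of_lt (by omega : k - r < k + 1), mul_zero]

lemma split2 (m : ℕ) (g : ℕ → ℕ → ℝ) :
    ∑ p ∈ range (m+1), ∑ r ∈ range (m+1), g p r
    = ((∑ p ∈ range m, ∑ r ∈ range m, g (p+1) (r+1))
      + ∑ p ∈ range m, g (p+1) 0)
      + ((∑ r ∈ range m, g 0 (r+1)) + g 0 0) := by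
  rw [Finset.sum_range_succ' (fun p => ∑ r ∈ range (m+1), g p r) m]
  congr 1
  · rw [← Finset.sum_add_distrib]
    refine Finset.sum_congr rfl fun p _ => ?_
    rw [Finset.sum_range_succ' (fun r => g (p+1) r) m]
  · rw [Finset.sum_range_succ' (fun r => g 0 r) m]

lemma pad (k : ℕ) (w : ℕ → ℝ) (h : w (k+1) = 0) :
    ∑ x ∈ range (k+1), w x = ∑ x ∈ range (k+2), w x := by
  rw [Finset.sum_range_succ _ (k+1), h, add_zero]

lemma step (k : ℕ) (f : ℕ → ℕ → ℝ) :
    ∑ p ∈ range (k+2), ∑ r ∈ range (k+2), (c (k+1) p r : ℝ) * f p r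
    = ∑ p ∈ range (k+1), ∑ r ∈ range (k+1),
        (c k p r : ℝ) * (f (p+1) r + f p r + f p (r+1)) := by
  have E1 : ∑ p ∈ range (k+1), ∑ r ∈ range (k+1), (c k p r : ℝ) * f (p+1) r
      = (∑ p ∈ range (k+1), ∑ r ∈ range (k+1), (c k p (r+1) : ℝ) * f (p+1) (r+1))
        + ∑ p ∈ range (k+1), (c k p 0 : ℝ) * f (p+1) 0 := by
    rw [← Finset.sum_add_distrib]
    refine Finset.sum_congr rfl fun p _ => ?_
    rw [pad k (fun r => (c k p r : ℝ) * f (p+1) r) (by simp [c_top1]),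
      Finset.sum_range_succ' (fun r => (c k p r : ℝ) * f (p+1) r) (k+1)]
  have E3 : ∑ p ∈ range (k+1), ∑ r ∈ range (k+1), (c k p r : ℝ) * f p (r+1)
      = (∑ p ∈ range (k+1), ∑ r ∈ range (k+1), (c k (p+1) r : ℝ) * f (p+1) (r+1))
        + ∑ r ∈ range (k+1), (c k 0 r : ℝ) * f 0 (r+1) := by
    rw [pad k (fun p => ∑ r ∈ range (k+1), (c k p r : ℝ) * f p (r+1))
        (by simp [c_top2]),
      Finset.sum_range_succ' (fun p => ∑ r ∈ range (k+1), (c k p r : ℝ) * f p (r+1)) (k+1)]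
  have E2 : ∑ p ∈ range (k+1), ∑ r ∈ range (k+1), (c k p r : ℝ) * f p r
      = ((∑ p ∈ range (k+1), ∑ r ∈ range (k+1), (c k (p+1) (r+1) : ℝ) * f (p+1) (r+1))
        + ∑ p ∈ range (k+1), (c k (p+1) 0 : ℝ) * f (p+1) 0)
        + ((∑ r ∈ range (k+1), (c k 0 (r+1) : ℝ) * f 0 (r+1)) + (c k 0 0 : ℝ) * f 0 0) := by
    have : ∑ p ∈ range (k+1), ∑ r ∈ range (k+1), (c k p r : ℝ) * f p r
        = ∑ p ∈ range (k+2), ∑ r ∈ range (k+2), (c k p r : ℝ) * f p r := by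
      calc ∑ p ∈ range (k+1), ∑ r ∈ range (k+1), (c k p r : ℝ) * f p r
          = ∑ p ∈ range (k+1), ∑ r ∈ range (k+2), (c k p r : ℝ) * f p r :=
            Finset.sum_congr rfl fun p _ =>
              pad k (fun r => (c k p r : ℝ) * f p r) (by simp [c_top1])
        _ = ∑ p ∈ range (k+2), ∑ r ∈ range (k+2), (c k p r : ℝ) * f p r :=
            pad k (fun p => ∑ r ∈ range (k+2), (c k p r : ℝ) * f p r) (by simp [c_top2])
    rw [this, split2 (k+1) (fun p r => (c k p r : ℝ) * f p r)]
  rw [split2 (k+1) (fun p r => (c (k+1) p r : ℝ) * f p r)]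
  simp only [c]
  push_cast
  simp only [add_mul, Finset.sum_add_distrib, mul_add]
  rw [E1, E2, E3]
  ring

lemma H_eq (t : ℕ → ℕ → ℝ) : ∀ k i j, H t i j k
    = ∑ p ∈ range (k+1), ∑ r ∈ range (k+1), (c k p r : ℝ) * t (i-p) (j+r) := by
  intro k
  induction k with
  | zero => intro i j; simp [H, c]
  | succ k ih =>
    intro i j
    show H t (i-1) j k + H t i j k + H t i (j+1) k = _
    rw [step k (fun p r => t (i-p) (j+r)), ih (i-1) j, ih i j, ih i (j+1)]
    simp only [mul_add, Finset.sum_add_distrib]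
    congr 1
    congr 1
    · refine Finset.sum_congr rfl fun p _ => Finset.sum_congr rfl fun r _ => ?_
      rw [show i-1-p = i-(p+1) from by omega]
    · refine Finset.sum_congr rfl fun p _ => Finset.sum_congr rfl fun r _ => ?_
      rw [show j+1+r = j+(r+1) from by omega]

lemma trinom_eq (a b c' : ℕ) :
    trinom (a+b+c') a b c' = (a+b+c').choose a * (b+c').choose b := by
  unfold trinom
  have h1 := Nat.choose_mul_factorial_mul_factorial (show a ≤ a+b+c' by omega)
  have h2 := Nat.choose_mul_factorial_mul_factorial (show b ≤ b+c' by omega)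
  rw [show a+b+c'-a = b+c' from by omega] at h1
  rw [show b+c'-b = c' from by omega] at h2
  apply Nat.div_eq_of_eq_mul_left
  · positivity
  · rw [← h1, ← h2]; ring

theorem stmt_4 (t : ℕ → ℕ → ℝ) (n : ℕ) :
    H t n 0 n =
      ∑ i ∈ Finset.range (n + 1), ∑ j ∈ Finset.range (i + 1),
        (trinom n j (n - i) (i - j) : ℝ) * t i j := by
  rw [← Finset.sum_range_reflect
    (fun i => ∑ j ∈ Finset.range (i + 1), (trinom n j (n - i) (i - j) : ℝ) * t i j) (n+1)]
  rw [H_eq t n n 0]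
  refine Finset.sum_congr rfl fun p hp => ?_
  rw [Finset.mem_range] at hp
  have hpn : p ≤ n := by omega
  rw [show n + 1 - 1 - p = n - p from by omega]
  have hz : ∀ r ∈ range (n+1), r ∉ range (n-p+1) → (c n p r : ℝ) * t (n-p) (0+r) = 0 := by
    intro r _ hr
    rw [Finset.mem_range, not_lt] at hr
    have : c n p r = 0 := by
      rw [c_eq]
      rcases le_or_gt r n with h | h
      · rw [Nat.choose_eq_zero_of_lt (show n - r < p by omega), mul_zero]
      · rw [Nat.choose_eq_zero_of_lt h, zero_mul]
    rw [this]; push_cast; ring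
  rw [← Finset.sum_subset (Finset.range_subset_range.mpr (by omega : n-p+1 ≤ n+1)) hz]
  refine Finset.sum_congr rfl fun j hj => ?_
  rw [Finset.mem_range] at hj
  have hj' : j ≤ n - p := by omega
  have ht := trinom_eq j p (n-p-j)
  rw [show j+p+(n-p-j) = n from by omega, show p+(n-p-j) = n-j from by omega] at ht
  rw [show n - (n-p) = p from by omega, c_eq, ht, zero_add]
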